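/- arXiv:2111.09254 — 2 statements merged into one kernel-verified Lean document; each statement's English description precedes it below -/
import Mathlib

section
/- For γ ∈ (0,1) and μ ∈ ℝ, the one-dimensional Gaussian location mixture f(x) = γ·φ(x) + (1−γ)·φ(x−μ), where φ is the standard normal density, is log-concave if and only if |μ| ≤ 2. -/
noncomputable def stdNormalPDF (x : ℝ) : ℝ :=
  (Real.sqrt (2 * Real.pi))⁻¹ * Real.exp (-(x ^ 2) / 2)

open Real Set Filter

lemma stdNormalPDF_pos (x : ℝ) : 0 < stdNormalPDF x := by
  unfold stdNormalPDF
  have : (0:ℝ) < Real.sqrt (2 * Real.pi) :=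
    Real.sqrt_pos.mpr (by positivity)
  positivity

lemma hasDerivAt_stdNormalPDF (x : ℝ) :
    HasDerivAt stdNormalPDF (-x * stdNormalPDF x) x := by
  have h1 : HasDerivAt (fun x : ℝ => -(x ^ 2) / 2) (-x) x := by
    have h := ((hasDerivAt_pow 2 x).neg).div_const 2
    refine h.congr_deriv ?_
    norm_num
    ring
  have h2 := (h1.exp).const_mul ((Real.sqrt (2 * Real.pi))⁻¹)
  refine h2.congr_deriv ?_
  unfold stdNormalPDF
  ring

lemma antitone_hasDerivAt_nonpos {h : ℝ → ℝ} {c x : ℝ}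
    (hh : Antitone h) (hd : HasDerivAt h c x) : c ≤ 0 := by
  have ht := (hd.hasDerivWithinAt (s := Ioi x))
  rw [hasDerivWithinAt_iff_tendsto_slope] at ht
  have hs : Ioi x \ {x} = Ioi x := by
    ext y; simp only [mem_diff, mem_Ioi, mem_singleton_iff]
    constructor
    · exact fun h => h.1
    · exact fun h => ⟨h, ne_of_gt h⟩
  rw [hs] at ht
  refine le_of_tendsto ht ?_
  filter_upwards [self_mem_nhdsWithin] with y hy
  rw [slope_def_field]
  have h1 : h y - h x ≤ 0 := sub_nonpos.2 (hh (le_of_lt hy))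
  have h2 : (0:ℝ) ≤ y - x := sub_nonneg.2 (le_of_lt hy)
  exact div_nonpos_of_nonpos_of_nonneg h1 h2

theorem gaussian_mixture_logconcave_iff (γ μ : ℝ) (hγ : γ ∈ Set.Ioo (0:ℝ) 1) :
    ConcaveOn ℝ Set.univ
        (fun x => Real.log (γ * stdNormalPDF x + (1 - γ) * stdNormalPDF (x - μ)))
      ↔ |μ| ≤ 2 := by
  obtain ⟨hγ0, hγ1⟩ := hγ
  have hγ1' : 0 < 1 - γ := by linarith
  set F : ℝ → ℝ := fun x => γ * stdNormalPDF x + (1 - γ) * stdNormalPDF (x - μ) with hFdef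
  have hFpos : ∀ x, 0 < F x := fun x => by
    have := stdNormalPDF_pos x
    have := stdNormalPDF_pos (x - μ)
    simp only [hFdef]
    positivity
  set F1 : ℝ → ℝ := fun x =>
    -(x * (γ * stdNormalPDF x)) - (x - μ) * ((1 - γ) * stdNormalPDF (x - μ)) with hF1def
  -- derivative of shifted pdf
  have hshift : ∀ x : ℝ, HasDerivAt (fun x => stdNormalPDF (x - μ))
      (-(x - μ) * stdNormalPDF (x - μ)) x := by
    intro x
    have := (hasDerivAt_stdNormalPDF (x - μ)).comp x ((hasDerivAt_id x).sub_const μ)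
    exact this.congr_deriv (by ring)
  have hF : ∀ x, HasDerivAt F (F1 x) x := by
    intro x
    have h1 := (hasDerivAt_stdNormalPDF x).const_mul γ
    have h2 := (hshift x).const_mul (1 - γ)
    have := h1.add h2
    refine this.congr_deriv ?_
    simp only [hF1def]; ring
  have hF1 : ∀ x, HasDerivAt F1
      ((x ^ 2 - 1) * (γ * stdNormalPDF x)
        + ((x - μ) ^ 2 - 1) * ((1 - γ) * stdNormalPDF (x - μ))) x := by
    intro x
    have h1 := (hasDerivAt_id x).mul ((hasDerivAt_stdNormalPDF x).const_mul γ)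
    have h2 := (((hasDerivAt_id x).sub_const μ)).mul ((hshift x).const_mul (1 - γ))
    have h3 := (h1.neg).sub h2
    simp only [id_eq] at h3
    refine h3.congr_deriv ?_
    ring
  -- derivative of log F
  set G1 : ℝ → ℝ := fun x => F1 x / F x with hG1def
  have hg : ∀ x, HasDerivAt (fun x => Real.log (F x)) (G1 x) x := fun x =>
    (hF x).log (hFpos x).ne'
  set G2 : ℝ → ℝ := fun x =>
    (((x ^ 2 - 1) * (γ * stdNormalPDF x)
        + ((x - μ) ^ 2 - 1) * ((1 - γ) * stdNormalPDF (x - μ))) * F x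
      - F1 x * F1 x) / (F x) ^ 2 with hG2def
  have hG1 : ∀ x, HasDerivAt G1 (G2 x) x := fun x =>
    (hF1 x).div (hF x) (hFpos x).ne'
  -- key numerator identity
  have hnum : ∀ x, ((x ^ 2 - 1) * (γ * stdNormalPDF x)
        + ((x - μ) ^ 2 - 1) * ((1 - γ) * stdNormalPDF (x - μ))) * F x
      - F1 x * F1 x
      = -( (γ * stdNormalPDF x) ^ 2) - ((1 - γ) * stdNormalPDF (x - μ)) ^ 2
        + (μ ^ 2 - 2) * ((γ * stdNormalPDF x) * ((1 - γ) * stdNormalPDF (x - μ))) := by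
    intro x
    simp only [hFdef, hF1def]
    ring
  constructor
  · -- concave → |μ| ≤ 2
    intro hconc
    by_contra hμ
    push_neg at hμ
    have hμ4 : 4 < μ ^ 2 := by
      have := abs_nonneg μ
      nlinarith [sq_abs μ]
    have hμ0 : μ ≠ 0 := by
      intro h; rw [h] at hμ4; norm_num at hμ4
    set x₀ : ℝ := (Real.log (γ / (1 - γ)) + μ ^ 2 / 2) / μ with hx₀def
    have hx₀ : x₀ * μ = Real.log γ - Real.log (1 - γ) + μ ^ 2 / 2 := by
      rw [hx₀def]
      field_simp
      rw [Real.log_div hγ0.ne' hγ1'.ne']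
      ring
    -- at x₀ the two components are equal
    have key : γ * Real.exp (-(x₀ ^ 2) / 2) = (1 - γ) * Real.exp (-((x₀ - μ) ^ 2) / 2) := by
      have h1 : Real.log (γ * Real.exp (-(x₀ ^ 2) / 2))
          = Real.log ((1 - γ) * Real.exp (-((x₀ - μ) ^ 2) / 2)) := by
        rw [Real.log_mul hγ0.ne' (Real.exp_ne_zero _),
            Real.log_mul hγ1'.ne' (Real.exp_ne_zero _), Real.log_exp, Real.log_exp]
        nlinarith [hx₀]
      have h2 : (0:ℝ) < γ * Real.exp (-(x₀ ^ 2) / 2) := by positivity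
      have h3 : (0:ℝ) < (1 - γ) * Real.exp (-((x₀ - μ) ^ 2) / 2) := by positivity
      calc γ * Real.exp (-(x₀ ^ 2) / 2)
          = Real.exp (Real.log (γ * Real.exp (-(x₀ ^ 2) / 2))) := (Real.exp_log h2).symm
        _ = Real.exp (Real.log ((1 - γ) * Real.exp (-((x₀ - μ) ^ 2) / 2))) := by rw [h1]
        _ = (1 - γ) * Real.exp (-((x₀ - μ) ^ 2) / 2) := Real.exp_log h3
    have hab : γ * stdNormalPDF x₀ = (1 - γ) * stdNormalPDF (x₀ - μ) := by
      unfold stdNormalPDF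
      linear_combination (Real.sqrt (2 * Real.pi))⁻¹ * key
    -- second derivative at x₀ is positive
    have hA : 0 < γ * stdNormalPDF x₀ := by
      have := stdNormalPDF_pos x₀; positivity
    have hG2pos : 0 < G2 x₀ := by
      rw [hG2def]
      apply div_pos
      · rw [hnum x₀, ← hab]
        nlinarith [mul_pos hA hA, hμ4]
      · exact pow_pos (hFpos x₀) 2
    -- but concavity forces deriv ≤ 0
    have hdiff : ∀ x ∈ (Set.univ : Set ℝ),
        DifferentiableAt ℝ (fun x => Real.log (F x)) x := fun x _ =>
      (hg x).differentiableAt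
    have hanti : AntitoneOn (deriv (fun x => Real.log (F x))) Set.univ :=
      hconc.antitoneOn_deriv hdiff
    have hderiv_eq : deriv (fun x => Real.log (F x)) = G1 := by
      funext x; exact (hg x).deriv
    have hanti' : Antitone G1 := by
      rw [← hderiv_eq]
      exact fun a b hab' => hanti (mem_univ a) (mem_univ b) hab'
    have := antitone_hasDerivAt_nonpos hanti' (hG1 x₀)
    linarith
  · -- |μ| ≤ 2 → concave
    intro hμ
    have hμ4 : μ ^ 2 ≤ 4 := by
      have h1 := abs_le.mp hμ
      nlinarith [sq_abs μ]
    refine concaveOn_of_hasDerivWithinAt2_nonpos convex_univ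
      (f' := G1) (f'' := G2) ?_ ?_ ?_ ?_
    · exact fun x _ => ((hg x).differentiableAt).continuousAt.continuousWithinAt
    · intro x _
      exact (hg x).hasDerivWithinAt
    · intro x _
      exact (hG1 x).hasDerivWithinAt
    · intro x _
      rw [hG2def]
      apply div_nonpos_of_nonpos_of_nonneg
      · rw [hnum x]
        have hA : 0 < γ * stdNormalPDF x := by
          have := stdNormalPDF_pos x; positivity
        have hB : 0 < (1 - γ) * stdNormalPDF (x - μ) := by
          have := stdNormalPDF_pos (x - μ); positivity
        nlinarith [sq_nonneg (γ * stdNormalPDF x - (1 - γ) * stdNormalPDF (x - μ)),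
          mul_pos hA hB]
      · exact sq_nonneg _
end

section
/- Let f be a log-concave probability density on ℝ and let F̄(x) = ∫ₓ^∞ f(t) dt be its survival function. Then F̄ is log-concave on the interior of its support. -/
open MeasureTheory Set

lemma lc_mul {f : ℝ → ℝ} (hf0 : ∀ x, 0 ≤ f x)
    (hlc : ∀ x y θ : ℝ, θ ∈ Set.Icc (0:ℝ) 1 →
      f x ^ θ * f y ^ (1 - θ) ≤ f (θ * x + (1 - θ) * y))
    {a s t : ℝ} (ha : a ≤ s) (ha' : a ≤ t) :
    f a * f (s + t - a) ≤ f s * f t := by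
  set b : ℝ := s + t - a with hb
  rcases eq_or_lt_of_le (le_trans ha (by linarith [hb] : s ≤ b)) with hab | hab
  · have hsa : s = a := by nlinarith
    have hta : t = a := by nlinarith
    rw [← hab, hsa, hta]
  · set θ : ℝ := (b - s) / (b - a) with hθ
    have hba : (0:ℝ) < b - a := by linarith
    have hb0 : b - a ≠ 0 := ne_of_gt hba
    have hθ0 : 0 ≤ θ := div_nonneg (by linarith [hb]) (by linarith)
    have hθ1 : θ ≤ 1 := (div_le_one hba).2 (by linarith)
    have h1 : θ * a + (1 - θ) * b = s := by rw [hθ]; field_simp; ring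
    have h2 : (1 - θ) * a + (1 - (1 - θ)) * b = t := by linarith [h1, hb]
    have e1 := hlc a b θ ⟨hθ0, hθ1⟩
    have e2 := hlc a b (1 - θ) ⟨by linarith, by linarith⟩
    rw [h1] at e1; rw [h2] at e2
    have hnn : (0:ℝ) ≤ f a ^ θ * f b ^ (1 - θ) :=
      mul_nonneg (Real.rpow_nonneg (hf0 a) _) (Real.rpow_nonneg (hf0 b) _)
    have hnn2 : (0:ℝ) ≤ f a ^ (1 - θ) * f b ^ (1 - (1 - θ)) :=
      mul_nonneg (Real.rpow_nonneg (hf0 a) _) (Real.rpow_nonneg (hf0 b) _)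
    calc f a * f b = (f a ^ θ * f b ^ (1 - θ)) * (f a ^ (1 - θ) * f b ^ (1 - (1 - θ))) := by
          rw [show (f a ^ θ * f b ^ (1 - θ)) * (f a ^ (1 - θ) * f b ^ (1 - (1 - θ)))
              = (f a ^ θ * f a ^ (1 - θ)) * (f b ^ (1 - θ) * f b ^ (1 - (1 - θ))) by ring,
            ← Real.rpow_add' (hf0 a) (by norm_num), ← Real.rpow_add' (hf0 b) (by norm_num)]
          norm_num
      _ ≤ f s * f t := mul_le_mul e1 e2 hnn2 (hf0 s)

-- set integral translation
lemma trans_Ioi (f : ℝ → ℝ) (α c : ℝ) :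
    ∫ s in Ioi α, f (s - c) = ∫ s in Ioi (α - c), f s := by
  have h1 : ∫ s in Ioi α, f (s - c) = ∫ s, (Ioi (α - c)).indicator f (s - c) := by
    rw [← integral_indicator measurableSet_Ioi]
    congr 1; ext s
    by_cases hs : s ∈ Ioi α
    · rw [indicator_of_mem hs, indicator_of_mem (by simpa using sub_lt_sub_right hs c)]
    · rw [indicator_of_notMem hs, indicator_of_notMem (by simp at hs ⊢; linarith)]
  rw [h1, integral_sub_right_eq_self ((Ioi (α - c)).indicator f) c,
    integral_indicator measurableSet_Ioi]

lemma core {f : ℝ → ℝ} (hf0 : ∀ x, 0 ≤ f x) (hfm : Measurable f) (hfi : Integrable f)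
    (hlc : ∀ x y θ : ℝ, θ ∈ Set.Icc (0:ℝ) 1 →
      f x ^ θ * f y ^ (1 - θ) ≤ f (θ * x + (1 - θ) * y))
    {α β c : ℝ} (hc : 0 ≤ c) (hαβ : α ≤ β + c) :
    (∫ s in Ioi (α - c), f s) * (∫ s in Ioi (β + c), f s)
      ≤ (∫ s in Ioi α, f s) * (∫ s in Ioi β, f s) := by
  set μ : Measure (ℝ × ℝ) := (volume : Measure ℝ).prod volume with hμ
  set A : Set (ℝ × ℝ) := Ioi α ×ˢ Ioi β with hA
  have hAm : MeasurableSet A := measurableSet_Ioi.prod measurableSet_Ioi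
  set p : ℝ × ℝ → ℝ := fun u => f u.1 * f u.2 with hp
  set h : ℝ × ℝ → ℝ := fun u => f (u.1 - c) * f (u.2 + c) with hh
  set q : ℝ × ℝ → ℝ := A.indicator (fun u => p u - h u) with hq
  set σ : ℝ × ℝ → ℝ × ℝ := fun u => (u.2 + c, u.1 - c) with hσ
  -- sigma is measure preserving and an embedding
  have hσmp : MeasurePreserving σ μ μ := by
    have h1 : MeasurePreserving (Prod.swap : ℝ × ℝ → ℝ × ℝ) μ μ := Measure.measurePreserving_swap
    have h2 : MeasurePreserving (fun v : ℝ × ℝ => v + (c, -c)) μ μ :=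
      measurePreserving_add_right _ (c, -c)
    have h3 := h2.comp h1
    have he : σ = (fun v : ℝ × ℝ => v + (c, -c)) ∘ Prod.swap := by
      ext u <;> simp [hσ, sub_eq_add_neg]
    rw [he]; exact h3
  have hσemb : MeasurableEmbedding σ := by
    have h2 := (MeasurableEquiv.addRight ((c, -c) : ℝ × ℝ)).measurableEmbedding
    have h3 := h2.comp (MeasurableEquiv.prodComm : ℝ × ℝ ≃ᵐ ℝ × ℝ).measurableEmbedding
    have he : σ = (MeasurableEquiv.addRight ((c, -c) : ℝ × ℝ))
        ∘ (MeasurableEquiv.prodComm : ℝ × ℝ ≃ᵐ ℝ × ℝ) := by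
      ext u <;> simp [hσ, MeasurableEquiv.addRight, MeasurableEquiv.prodComm, sub_eq_add_neg]
    rw [he]; exact h3
  -- integrability
  have hfc : Integrable (fun s => f (s - c)) volume :=
    (measurePreserving_sub_right volume c).integrable_comp_emb
      (MeasurableEquiv.subRight c).measurableEmbedding |>.mpr hfi
  have hfc' : Integrable (fun s => f (s + c)) volume :=
    (measurePreserving_add_right volume c).integrable_comp_emb
      (MeasurableEquiv.addRight c).measurableEmbedding |>.mpr hfi
  have hpint : Integrable p μ := hfi.mul_prod hfi
  have hhint : Integrable h μ := hfc.mul_prod hfc'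
  have hqint : Integrable q μ := (hpint.sub hhint).indicator hAm
  have hqσint : Integrable (fun u => q (σ u)) μ := (hσmp.integrable_comp_emb hσemb).mpr hqint
  -- pointwise inequality
  have key : ∀ u : ℝ × ℝ, 0 ≤ q u + q (σ u) := by
    intro u
    obtain ⟨s, t⟩ := u
    have hσval : σ (s, t) = (t + c, s - c) := rfl
    have hph : p (σ (s, t)) - h (σ (s, t)) = -(p (s, t) - h (s, t)) := by
      simp only [hσval, hp, hh, add_sub_cancel_right, sub_add_cancel]
      ring
    rcases le_or_gt s (t + c) with hst | hst
    · -- p - h ≥ 0 at u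
      have hgood : 0 ≤ p (s, t) - h (s, t) := by
        have := lc_mul hf0 hlc (a := s - c) (s := s) (t := t) (by linarith) (by linarith)
        have he : s + t - (s - c) = t + c := by ring
        rw [he] at this
        simp only [hp, hh]; linarith [this]
      by_cases hu : (s, t) ∈ A
      · by_cases hv : σ (s, t) ∈ A
        · rw [hq, indicator_of_mem hu, indicator_of_mem hv, hph]; linarith
        · rw [hq, indicator_of_mem hu, indicator_of_notMem hv]; linarith
      · -- σ u ∈ A → u ∈ A in this case, so σ u ∉ A
        have hv : σ (s, t) ∉ A := by
          intro hv
          apply hu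
          simp only [hA, hσval, mem_prod, mem_Ioi] at hv ⊢
          constructor
          · linarith [hv.2]
          · linarith [hv.1, hv.2]
        rw [hq, indicator_of_notMem hu, indicator_of_notMem hv]; linarith
    · -- p - h ≤ 0 at u
      have hbad : p (s, t) - h (s, t) ≤ 0 := by
        have := lc_mul hf0 hlc (a := t) (s := t + c) (t := s - c) (by linarith) (by linarith)
        have he : t + c + (s - c) - t = s := by ring
        rw [he] at this
        simp only [hp, hh]; nlinarith [this, mul_comm (f t) (f s), mul_comm (f (t + c)) (f (s - c))]
      by_cases hu : (s, t) ∈ A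
      · have hv : σ (s, t) ∈ A := by
          simp only [hA, hσval, mem_prod, mem_Ioi] at hu ⊢
          constructor
          · linarith [hu.2]
          · linarith [hu.1]
        rw [hq, indicator_of_mem hu, indicator_of_mem hv, hph]; linarith
      · by_cases hv : σ (s, t) ∈ A
        · rw [hq, indicator_of_notMem hu, indicator_of_mem hv, hph]; linarith
        · rw [hq, indicator_of_notMem hu, indicator_of_notMem hv]; linarith
  -- conclude 0 ≤ ∫ q
  have hint_eq : ∫ u, q (σ u) ∂μ = ∫ u, q u ∂μ := hσmp.integral_comp hσemb q
  have hsum : 0 ≤ ∫ u, (q u + q (σ u)) ∂μ := integral_nonneg key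
  rw [integral_add hqint hqσint, hint_eq] at hsum
  have hqnn : 0 ≤ ∫ u, q u ∂μ := by linarith
  -- compute ∫ q
  rw [hq, integral_indicator hAm] at hqnn
  rw [integral_sub (hpint.integrableOn) (hhint.integrableOn)] at hqnn
  have hre : μ.restrict A = (volume.restrict (Ioi α)).prod (volume.restrict (Ioi β)) := by
    rw [hμ, hA, Measure.prod_restrict]
  rw [hre] at hqnn
  have h1 : ∫ u, p u ∂((volume.restrict (Ioi α)).prod (volume.restrict (Ioi β)))
      = (∫ s in Ioi α, f s) * (∫ s in Ioi β, f s) := integral_prod_mul f f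
  have h2 : ∫ u, h u ∂((volume.restrict (Ioi α)).prod (volume.restrict (Ioi β)))
      = (∫ s in Ioi (α - c), f s) * (∫ s in Ioi (β + c), f s) := by
    rw [show (∫ u, h u ∂((volume.restrict (Ioi α)).prod (volume.restrict (Ioi β))))
      = (∫ s in Ioi α, f (s - c)) * (∫ s in Ioi β, f (s + c)) from
        integral_prod_mul (fun s => f (s - c)) (fun s => f (s + c)),
      trans_Ioi f α c]
    congr 1
    have := trans_Ioi f β (-c)
    simpa [sub_neg_eq_add] using this
  rw [h1, h2] at hqnn
  linarith

lemma G_antitone {f : ℝ → ℝ} (hf0 : ∀ x, 0 ≤ f x) (hfi : Integrable f) :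
    Antitone (fun t => ∫ s in Ioi t, f s) := by
  intro a b hab
  exact setIntegral_mono_set hfi.integrableOn
    (Filter.Eventually.of_forall fun x => hf0 x)
    (HasSubset.Subset.eventuallyLE (Ioi_subset_Ioi hab))

lemma G_cont {f : ℝ → ℝ} (hfi : Integrable f) :
    Continuous (fun t => ∫ s in Ioi t, f s) := by
  have key : ∀ t : ℝ, (∫ s in Ioi t, f s)
      = (∫ s in Ioi (0:ℝ), f s) - ∫ s in (0:ℝ)..t, f s := by
    intro t
    rcases le_or_gt 0 t with ht | ht
    · rw [intervalIntegral.integral_of_le ht]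
      have hu : Ioc (0:ℝ) t ∪ Ioi t = Ioi (0:ℝ) := Ioc_union_Ioi_eq_Ioi ht
      have hd : Disjoint (Ioc (0:ℝ) t) (Ioi t) := Ioc_disjoint_Ioi le_rfl
      rw [← hu, setIntegral_union hd measurableSet_Ioi hfi.integrableOn hfi.integrableOn]
      ring
    · rw [intervalIntegral.integral_of_ge (le_of_lt ht)]
      have hu : Ioc t (0:ℝ) ∪ Ioi (0:ℝ) = Ioi t := Ioc_union_Ioi_eq_Ioi (le_of_lt ht)
      rw [← hu, setIntegral_union (Ioc_disjoint_Ioi le_rfl) measurableSet_Ioi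
        hfi.integrableOn hfi.integrableOn]
      ring
    
  have : (fun t => ∫ s in Ioi t, f s)
      = fun t => (∫ s in Ioi (0:ℝ), f s) - ∫ s in (0:ℝ)..t, f s := funext key
  rw [this]
  exact continuous_const.sub (hfi.continuous_primitive 0)

lemma main_aux {f : ℝ → ℝ} (hf0 : ∀ x, 0 ≤ f x) (hfm : Measurable f) (hfi : Integrable f)
    (hlc : ∀ x y θ : ℝ, θ ∈ Set.Icc (0:ℝ) 1 →
      f x ^ θ * f y ^ (1 - θ) ≤ f (θ * x + (1 - θ) * y))
    {x y : ℝ} (hxy : x ≤ y)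
    (hGy : 0 < ∫ s in Ioi y, f s)
    {θ : ℝ} (hθ : θ ∈ Icc (0:ℝ) 1) :
    (∫ s in Ioi x, f s) ^ θ * (∫ s in Ioi y, f s) ^ (1 - θ)
      ≤ ∫ s in Ioi (θ * x + (1 - θ) * y), f s := by
  set G : ℝ → ℝ := fun t => ∫ s in Ioi t, f s with hG
  clear_value G
  have hanti : Antitone G := hG ▸ G_antitone hf0 hfi
  have hcont : Continuous G := hG ▸ G_cont hfi
  have hGy' : 0 < G y := by rw [hG]; exact hGy
  have hGpos : ∀ t, t ≤ y → 0 < G t := fun t ht => lt_of_lt_of_le hGy' (hanti ht)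
  set aff : ℝ → ℝ := fun u => u * x + (1 - u) * y with haff
  clear_value aff
  have haffle : ∀ u, u ∈ Icc (0:ℝ) 1 → aff u ≤ y := by
    intro u hu
    simp only [haff]
    nlinarith [hu.1, hu.2, hxy]
  set L : ℝ → ℝ := fun t => Real.log (G t) with hL
  clear_value L
  set φ : ℝ → ℝ := fun u => L (aff u) - u * L x - (1 - u) * L y with hφ
  clear_value φ
  -- continuity of φ on Icc 0 1
  have haffcont : Continuous aff := by rw [haff]; fun_prop
  have hφcont : ContinuousOn φ (Icc 0 1) := by
    have hLG : ContinuousOn (fun u => Real.log (G (aff u))) (Icc 0 1) :=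
      Real.continuousOn_log.comp ((hcont.comp haffcont).continuousOn)
        (fun u hu => ne_of_gt (hGpos _ (haffle u hu)))
    rw [hφ, hL]
    exact (hLG.sub (by fun_prop)).sub (by fun_prop)
  -- midpoint concavity of φ
  have hmid : ∀ u ∈ Icc (0:ℝ) 1, ∀ v ∈ Icc (0:ℝ) 1,
      (φ u + φ v) / 2 ≤ φ ((u + v) / 2) := by
    intro u hu v hv
    have hmem : (u + v) / 2 ∈ Icc (0:ℝ) 1 := ⟨by linarith [hu.1, hv.1], by linarith [hu.2, hv.2]⟩
    have hm : aff ((u + v) / 2) = (aff u + aff v) / 2 := by rw [haff]; ring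
    have hGG : G (aff u) * G (aff v) ≤ G (aff ((u + v) / 2)) * G (aff ((u + v) / 2)) := by
      rw [hm]
      rcases le_total (aff u) (aff v) with h | h
      · have hcore := core hf0 hfm hfi hlc (c := (aff v - aff u) / 2)
          (α := (aff u + aff v) / 2) (β := (aff u + aff v) / 2) (by linarith) (by linarith)
        rw [show (aff u + aff v) / 2 - (aff v - aff u) / 2 = aff u by ring,
          show (aff u + aff v) / 2 + (aff v - aff u) / 2 = aff v by ring] at hcore
        rw [hG]; exact hcore
      · have hcore := core hf0 hfm hfi hlc (c := (aff u - aff v) / 2)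
          (α := (aff u + aff v) / 2) (β := (aff u + aff v) / 2) (by linarith) (by linarith)
        rw [show (aff u + aff v) / 2 - (aff u - aff v) / 2 = aff v by ring,
          show (aff u + aff v) / 2 + (aff u - aff v) / 2 = aff u by ring] at hcore
        rw [hG]; simp only []; linarith [hcore]
    have hpu : 0 < G (aff u) := hGpos _ (haffle u hu)
    have hpv : 0 < G (aff v) := hGpos _ (haffle v hv)
    have hpm : 0 < G (aff ((u + v) / 2)) := hGpos _ (haffle _ hmem)
    have hlog : L (aff u) + L (aff v) ≤ L (aff ((u + v) / 2)) + L (aff ((u + v) / 2)) := by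
      have h1 : Real.log (G (aff u) * G (aff v))
          ≤ Real.log (G (aff ((u + v) / 2)) * G (aff ((u + v) / 2))) :=
        Real.log_le_log (mul_pos hpu hpv) hGG
      rw [Real.log_mul (ne_of_gt hpu) (ne_of_gt hpv),
        Real.log_mul (ne_of_gt hpm) (ne_of_gt hpm)] at h1
      simpa only [hL] using h1
    rw [hφ]
    simp only []
    linarith [hlog]
  -- boundary values
  have hφ0 : φ 0 = 0 := by rw [hφ]; simp only []; rw [haff]; simp only [hL]; norm_num
  have hφ1 : φ 1 = 0 := by rw [hφ]; simp only []; rw [haff]; simp only [hL]; norm_num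
  -- minimum is nonnegative
  obtain ⟨θ₀, hθ₀, hminon⟩ := isCompact_Icc.exists_isMinOn
    (nonempty_Icc.2 zero_le_one) hφcont
  have hminle : ∀ u ∈ Icc (0:ℝ) 1, φ θ₀ ≤ φ u := fun u hu => hminon hu
  have hmin0 : 0 ≤ φ θ₀ := by
    rcases le_total θ₀ (1 / 2) with h | h
    · have h2 : 2 * θ₀ ∈ Icc (0:ℝ) 1 := ⟨by linarith [hθ₀.1], by linarith⟩
      have hm := hmid 0 ⟨le_rfl, zero_le_one⟩ (2 * θ₀) h2
      rw [show (0 + 2 * θ₀) / 2 = θ₀ by ring, hφ0] at hm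
      have h3 := hminle _ h2
      linarith
    · have h2 : 2 * θ₀ - 1 ∈ Icc (0:ℝ) 1 := ⟨by linarith, by linarith [hθ₀.2]⟩
      have hm := hmid (2 * θ₀ - 1) h2 1 ⟨zero_le_one, le_rfl⟩
      rw [show (2 * θ₀ - 1 + 1) / 2 = θ₀ by ring, hφ1] at hm
      have h3 := hminle _ h2
      linarith
  have hφθ : 0 ≤ φ θ := le_trans hmin0 (hminle θ hθ)
  -- conclude
  have hkey : θ * L x + (1 - θ) * L y ≤ L (aff θ) := by
    rw [hφ] at hφθ; simp only [] at hφθ; linarith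
  have hGx : 0 < G x := hGpos x hxy
  have hGaff : 0 < G (aff θ) := hGpos _ (haffle θ hθ)
  have hLx : L x = Real.log (G x) := by rw [hL]
  have hLy : L y = Real.log (G y) := by rw [hL]
  have hLaff : L (aff θ) = Real.log (G (aff θ)) := by rw [hL]
  have final : G x ^ θ * G y ^ (1 - θ) ≤ G (aff θ) := by
    rw [Real.rpow_def_of_pos hGx, Real.rpow_def_of_pos hGy', ← Real.exp_log hGaff,
      ← Real.exp_add]
    apply Real.exp_le_exp.2
    rw [← hLx, ← hLy, ← hLaff]
    linarith [hkey]
  rw [hG, haff] at final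
  simpa using final

theorem survival_function_logconcave (f : ℝ → ℝ)
    (hf0 : ∀ x, 0 ≤ f x) (hfm : Measurable f)
    (hfi : Integrable f) (hf1 : ∫ x, f x = 1)
    (hlc : ∀ x y θ : ℝ, θ ∈ Set.Icc (0:ℝ) 1 →
      f x ^ θ * f y ^ (1 - θ) ≤ f (θ * x + (1 - θ) * y)) :
    ∀ x ∈ interior (Function.support fun t => ∫ s in Set.Ioi t, f s),
    ∀ y ∈ interior (Function.support fun t => ∫ s in Set.Ioi t, f s),
    ∀ θ : ℝ, θ ∈ Set.Icc (0:ℝ) 1 →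
      (∫ s in Set.Ioi x, f s) ^ θ * (∫ s in Set.Ioi y, f s) ^ (1 - θ)
        ≤ ∫ s in Set.Ioi (θ * x + (1 - θ) * y), f s := by
  intro x hx y hy θ hθ
  have hx' : x ∈ Function.support fun t => ∫ s in Set.Ioi t, f s := interior_subset hx
  have hy' : y ∈ Function.support fun t => ∫ s in Set.Ioi t, f s := interior_subset hy
  have hxne : (∫ s in Set.Ioi x, f s) ≠ 0 := hx'
  have hyne : (∫ s in Set.Ioi y, f s) ≠ 0 := hy'
  have hGx : 0 < ∫ s in Set.Ioi x, f s :=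
    lt_of_le_of_ne (setIntegral_nonneg measurableSet_Ioi fun a _ => hf0 a) (Ne.symm hxne)
  have hGy : 0 < ∫ s in Set.Ioi y, f s :=
    lt_of_le_of_ne (setIntegral_nonneg measurableSet_Ioi fun a _ => hf0 a) (Ne.symm hyne)
  rcases le_total x y with h | h
  · exact main_aux hf0 hfm hfi hlc h hGy hθ
  · have hmm := main_aux hf0 hfm hfi hlc h hGx
      (θ := 1 - θ) ⟨by linarith [hθ.2], by linarith [hθ.1]⟩
    rw [show (1:ℝ) - (1 - θ) = θ by ring,
      show (1 - θ) * y + θ * x = θ * x + (1 - θ) * y by ring] at hmm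
    linarith [hmm]
end
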